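/- Let A : H_n → R^m satisfy the Frobenius-robust rank null space property with respect to ℓ_q of order r with constants 0 < ρ < 1 and τ > 0. Let W be an invertible positive definite Hermitian n×n matrix with condition number κ(W) = λ_max(W)/λ_min(W) satisfying κ(W)² ρ < 1. Then the map B : H_n → R^m defined by B(X) = A(W^{-1} X W^{-1}) satisfies the Frobenius-robust rank null space property with respect to ℓ_q of order r with constants κ(W)² ρ and ‖W‖_∞² τ, where ‖W‖_∞ = λ_max(W). -/

import Mathlib

open scoped BigOperators
open MeasureTheory Matrix
open scoped ComplexOrder

noncomputable section

namespace RT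

instance {n m : ℕ} : MeasurableSpace (Matrix (Fin n) (Fin m) ℝ) :=
  inferInstanceAs (MeasurableSpace (Fin n → Fin m → ℝ))

/-- the values of a real tuple sorted in nonincreasing order -/
def sortDesc {n : ℕ} (f : Fin n → ℝ) : Fin n → ℝ :=
  fun i => - ((fun j => - f j) ∘ (Tuple.sort (fun j => - f j))) i

/-- singular values of a square complex matrix, in nonincreasing order -/
def singVals {n : ℕ} (M : Matrix (Fin n) (Fin n) ℂ) : Fin n → ℝ :=
  sortDesc (fun i =>
    Real.sqrt ((Matrix.isHermitian_conjTranspose_mul_self M).eigenvalues i))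

/-- `‖M_r‖_F`: Frobenius norm of the `r` largest singular values -/
def headFro {n : ℕ} (M : Matrix (Fin n) (Fin n) ℂ) (r : ℕ) : ℝ :=
  Real.sqrt (∑ i : Fin n, if (i : ℕ) < r then (singVals M i) ^ 2 else 0)

/-- `‖M_{r,c}‖_F`: Frobenius norm of the tail singular values -/
def tailFro {n : ℕ} (M : Matrix (Fin n) (Fin n) ℂ) (r : ℕ) : ℝ :=
  Real.sqrt (∑ i : Fin n, if r ≤ (i : ℕ) then (singVals M i) ^ 2 else 0)

/-- `‖M_r‖_*`: sum of the `r` largest singular values -/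
def headNuc {n : ℕ} (M : Matrix (Fin n) (Fin n) ℂ) (r : ℕ) : ℝ :=
  ∑ i : Fin n, if (i : ℕ) < r then singVals M i else 0

/-- `‖M_{r,c}‖_*`: sum of the singular values beyond the `r` largest -/
def tailNuc {n : ℕ} (M : Matrix (Fin n) (Fin n) ℂ) (r : ℕ) : ℝ :=
  ∑ i : Fin n, if r ≤ (i : ℕ) then singVals M i else 0

/-- nuclear norm -/
def nucNorm {n : ℕ} (M : Matrix (Fin n) (Fin n) ℂ) : ℝ :=
  ∑ i : Fin n, singVals M i

/-- Frobenius norm -/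
def froNorm {n : ℕ} (M : Matrix (Fin n) (Fin n) ℂ) : ℝ :=
  Real.sqrt (∑ i : Fin n, (singVals M i) ^ 2)

/-- `ℓ_q` norm on `ℝ^m` -/
def lqNorm {m : ℕ} (q : ℝ) (v : Fin m → ℝ) : ℝ :=
  (∑ j : Fin m, |v j| ^ q) ^ (1 / q)

/-- the Frobenius-robust rank null space property of order `r` with
constants `ρ`, `τ` with respect to `ℓ_q`, for a map on Hermitian matrices -/
def FrobRobustNSP {n m : ℕ} (A : Matrix (Fin n) (Fin n) ℂ → (Fin m → ℝ))
    (q : ℝ) (r : ℕ) (ρ τ : ℝ) : Prop :=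
  ∀ M : Matrix (Fin n) (Fin n) ℂ, M.IsHermitian →
    headFro M r ≤ (ρ / Real.sqrt r) * tailNuc M r + τ * lqNorm q (A M)

/-- rank one measurement map with real measurement vectors `a j`,
acting on complex Hermitian matrices: `X ↦ (tr(X a_j a_j^*))_j` -/
def measR {n m : ℕ} (a : Fin m → Fin n → ℝ) (X : Matrix (Fin n) (Fin n) ℂ) :
    Fin m → ℝ :=
  fun j => (Matrix.trace (X *
    Matrix.vecMulVec (fun k => (a j k : ℂ)) (fun k => (a j k : ℂ)))).re

/-- rank one measurement map with complex measurement vectors `a j`: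
`X ↦ (tr(X a_j a_j^*))_j` -/
def measC {n m : ℕ} (a : Fin m → Fin n → ℂ) (X : Matrix (Fin n) (Fin n) ℂ) :
    Fin m → ℝ :=
  fun j => (Matrix.trace (X * Matrix.vecMulVec (a j) (star (a j)))).re

/-- largest eigenvalue of a (Hermitian) matrix (junk value `0` otherwise) -/
def eigMax {𝕜 : Type*} [RCLike 𝕜] {n : ℕ} (M : Matrix (Fin n) (Fin n) 𝕜) : ℝ := by
  classical exact if h : M.IsHermitian then ⨆ i, h.eigenvalues i else 0

/-- smallest eigenvalue of a (Hermitian) matrix (junk value `0` otherwise) -/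
def eigMin {𝕜 : Type*} [RCLike 𝕜] {n : ℕ} (M : Matrix (Fin n) (Fin n) 𝕜) : ℝ := by
  classical exact if h : M.IsHermitian then ⨅ i, h.eigenvalues i else 0

/-- positive semidefinite square root (junk value `0` if not psd) -/
def psdSqrt {n : ℕ} (M : Matrix (Fin n) (Fin n) ℝ) : Matrix (Fin n) (Fin n) ℝ := by
  classical exact if h : M.PosSemidef then (h.1.eigenvectorUnitary.1 *
    Matrix.diagonal ((↑) ∘ Real.sqrt ∘ h.1.eigenvalues) *
    (star h.1.eigenvectorUnitary : Matrix (Fin n) (Fin n) ℝ)) else 0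

/-- the law of an `n × m` matrix with i.i.d. standard Gaussian entries -/
def gaussMatrix (n m : ℕ) : Measure (Matrix (Fin n) (Fin m) ℝ) :=
  Measure.pi fun _ : Fin n => Measure.pi fun _ : Fin m =>
    ProbabilityTheory.gaussianReal 0 1

/-- `μ` is the uniform (Haar) distribution on the Stiefel manifold `V_n^m`:
a probability measure carried by `{Q : Qᵀ Q = 1}` which is invariant under
left multiplication by orthogonal matrices. -/
def IsHaarStiefel {m n : ℕ} (μ : Measure (Matrix (Fin m) (Fin n) ℝ)) : Prop :=
  IsProbabilityMeasure μ ∧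
    μ {Q | Qᵀ * Q = 1} = 1 ∧
    ∀ O : Matrix (Fin m) (Fin m) ℝ, Oᵀ * O = 1 →
      Measure.map (fun Q => O * Q) μ = μ

end RT


instance (n m : ℕ) : MeasureTheory.IsProbabilityMeasure (RT.gaussMatrix n m) := by
  unfold RT.gaussMatrix
  exact MeasureTheory.Measure.pi.instIsProbabilityMeasure _


namespace StmtAux
variable {n : ℕ}
abbrev E (n : ℕ) := EuclideanSpace ℂ (Fin n)



lemma repr_toEuclideanLin {H : Matrix (Fin n) (Fin n) ℂ} (hH : H.IsHermitian)
    (x : E n) (j : Fin n) :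
    hH.eigenvectorBasis.repr (Matrix.toEuclideanLin H x) j
      = hH.eigenvalues j * hH.eigenvectorBasis.repr x j := by
  have hsym := (Matrix.isHermitian_iff_isSymmetric.mp hH)
  have hb : Matrix.toEuclideanLin H (hH.eigenvectorBasis j)
      = (hH.eigenvalues j : ℝ) • (hH.eigenvectorBasis j : E n) := by
    apply (WithLp.equiv 2 _).injective
    ext k
    have := congrFun (hH.mulVec_eigenvectorBasis j) k
    simpa [Matrix.toEuclideanLin_apply] using this
  rw [OrthonormalBasis.repr_apply_apply, OrthonormalBasis.repr_apply_apply,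
    ← hsym (hH.eigenvectorBasis j) x, hb, RCLike.real_smul_eq_coe_smul (K := ℂ),
    inner_smul_left]
  simp


-- norm squared via orthonormal basis coefficients
lemma norm_sq_repr (b : OrthonormalBasis (Fin n) ℂ (E n)) (x : E n) :
    ‖x‖ ^ 2 = ∑ k, ‖b.repr x k‖ ^ 2 := by
  rw [← b.repr.norm_map x, EuclideanSpace.norm_eq, Real.sq_sqrt]
  · exact Finset.sum_nonneg fun k _ => sq_nonneg _
-- quadratic form expansion
lemma qf_expand {H : Matrix (Fin n) (Fin n) ℂ} (hH : H.IsHermitian) (x : E n)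
    (hrepr : ∀ j, hH.eigenvectorBasis.repr (Matrix.toEuclideanLin H x) j
      = hH.eigenvalues j * hH.eigenvectorBasis.repr x j) :
    Complex.re (inner ℂ x (Matrix.toEuclideanLin H x))
      = ∑ k, hH.eigenvalues k * ‖hH.eigenvectorBasis.repr x k‖ ^ 2 := by
  rw [← hH.eigenvectorBasis.repr.inner_map_map x (Matrix.toEuclideanLin H x)]
  rw [PiLp.inner_apply]
  rw [Complex.re_sum]
  refine Finset.sum_congr rfl fun k _ => ?_
  rw [hrepr k, RCLike.inner_apply]
  set c := hH.eigenvectorBasis.repr x k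
  have : (hH.eigenvalues k * c) * (starRingEnd ℂ) c = (hH.eigenvalues k : ℂ) * ((starRingEnd ℂ) c * c) := by ring
  rw [this]
  rw [Complex.conj_mul']
  rw [← Complex.ofReal_pow, ← Complex.ofReal_mul, Complex.ofReal_re]


lemma repr_zero_of_mem_span (b : OrthonormalBasis (Fin n) ℂ (E n))
    {ι : Type*} (g : ι → Fin n) {x : E n}
    (hx : x ∈ Submodule.span ℂ (Set.range fun i => (b (g i) : E n)))
    {k : Fin n} (hk : ∀ i, g i ≠ k) : b.repr x k = 0 := by
  induction hx using Submodule.span_induction with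
  | mem y hy =>
      obtain ⟨i, rfl⟩ := hy
      rw [b.repr_self]
      simp [EuclideanSpace.single_apply, (hk i).symm]
  | zero => simp
  | add y z _ _ hy hz => rw [map_add]; simp [Pi.add_apply, hy, hz]
  | smul c y _ hy => rw [_root_.map_smul]; simp [hy]

lemma finrank_span_orthonormal (b : OrthonormalBasis (Fin n) ℂ (E n))
    {k : ℕ} (g : Fin k → Fin n) (hg : Function.Injective g) :
    Module.finrank ℂ (Submodule.span ℂ (Set.range fun i => (b (g i) : E n))) = k := by
  have ho : Orthonormal ℂ (fun i => (b (g i) : E n)) := b.orthonormal.comp g hg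
  rw [finrank_span_eq_card ho.linearIndependent, Fintype.card_fin]

-- sort facts
lemma sortDesc_eq (f : Fin n → ℝ) :
    ∀ i, (fun i => - ((fun j => - f j) ∘ (Tuple.sort (fun j => - f j))) i) i
       = f (Tuple.sort (fun j => - f j) i) := by
  intro i; simp

lemma sortDesc_antitone (f : Fin n → ℝ) :
    Antitone (fun i => f (Tuple.sort (fun j => - f j) i)) := by
  intro i j hij
  have := Tuple.monotone_sort (fun j => - f j) hij
  simpa using this


lemma norm_toEuclideanLin_sq (A : Matrix (Fin n) (Fin n) ℂ) (x : E n) :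
    ‖Matrix.toEuclideanLin A x‖ ^ 2
      = Complex.re (inner ℂ x (Matrix.toEuclideanLin (Aᴴ * A) x)) := by
  have hmul : Matrix.toEuclideanLin (Aᴴ * A) x
      = Matrix.toEuclideanLin Aᴴ (Matrix.toEuclideanLin A x) := by
    apply (WithLp.equiv 2 _).injective
    simp [Matrix.toEuclideanLin_apply, Matrix.mulVec_mulVec]
  rw [hmul, Matrix.toEuclideanLin_conjTranspose_eq_adjoint,
    LinearMap.adjoint_inner_right]
  exact (inner_self_eq_norm_sq (𝕜 := ℂ) ((Matrix.toEuclideanLin A) x)).symm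

lemma singVals_eq (A : Matrix (Fin n) (Fin n) ℂ) (k : Fin n) :
    RT.singVals A k
      = Real.sqrt ((Matrix.isHermitian_conjTranspose_mul_self A).eigenvalues
          (Tuple.sort (fun j => - Real.sqrt
            ((Matrix.isHermitian_conjTranspose_mul_self A).eigenvalues j)) k)) := by
  simp [RT.singVals, RT.sortDesc]

lemma singVals_nonneg (A : Matrix (Fin n) (Fin n) ℂ) (k : Fin n) :
    0 ≤ RT.singVals A k := by
  rw [singVals_eq]; exact Real.sqrt_nonneg _

lemma singVals_antitone (A : Matrix (Fin n) (Fin n) ℂ) :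
    Antitone (RT.singVals A) := by
  intro i j hij
  rw [singVals_eq, singVals_eq]
  have := Tuple.monotone_sort (fun j => - Real.sqrt
    ((Matrix.isHermitian_conjTranspose_mul_self A).eigenvalues j)) hij
  simpa using this
end StmtAux

namespace StmtAux
variable {n : ℕ}
lemma sv_lower (A : Matrix (Fin n) (Fin n) ℂ) (i : Fin n) :
    ∃ V : Submodule ℂ (E n), Module.finrank ℂ V = i.1 + 1 ∧
      ∀ x ∈ V, RT.singVals A i * ‖x‖ ≤ ‖Matrix.toEuclideanLin A x‖ := by
  have hA := Matrix.isHermitian_conjTranspose_mul_self A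
  set eA := hA.eigenvalues with heA
  set u := hA.eigenvectorBasis with hu
  set p := Tuple.sort (fun j => - Real.sqrt (eA j)) with hp
  have hsv : ∀ k : Fin n, RT.singVals A k = Real.sqrt (eA (p k)) := fun k => singVals_eq A k
  have heignn : ∀ k, 0 ≤ eA k := fun k => (Matrix.posSemidef_conjTranspose_mul_self A).eigenvalues_nonneg k
  set g : Fin (i.1 + 1) → Fin n := fun j => p ⟨j.1, by omega⟩ with hg
  have hginj : Function.Injective g := by
    intro a b hab
    have h := congrArg Fin.val (p.injective hab)
    simp at h
    exact Fin.ext h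
  refine ⟨Submodule.span ℂ (Set.range fun j => (u (g j) : E n)),
    finrank_span_orthonormal u g hginj, ?_⟩
  intro x hx
  have hx2 : ‖Matrix.toEuclideanLin A x‖ ^ 2 = ∑ k, eA k * ‖u.repr x k‖ ^ 2 := by
    rw [norm_toEuclideanLin_sq, qf_expand hA x (fun j => repr_toEuclideanLin hA x j)]
  have hsum : (RT.singVals A i) ^ 2 * ‖x‖ ^ 2 ≤ ‖Matrix.toEuclideanLin A x‖ ^ 2 := by
    rw [hx2, norm_sq_repr u x,
      ← Equiv.sum_comp p (fun k => eA k * ‖u.repr x k‖ ^ 2),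
      ← Equiv.sum_comp p (fun k => ‖u.repr x k‖ ^ 2), Finset.mul_sum]
    apply Finset.sum_le_sum
    intro j _
    by_cases hj : j.1 ≤ i.1
    · have hle : RT.singVals A i ≤ Real.sqrt (eA (p j)) := by
        rw [← hsv j]; exact singVals_antitone A (by exact hj)
      have h2 : (RT.singVals A i) ^ 2 ≤ eA (p j) := by
        calc (RT.singVals A i) ^ 2 ≤ (Real.sqrt (eA (p j))) ^ 2 :=
              pow_le_pow_left₀ (singVals_nonneg A i) hle 2
          _ = eA (p j) := Real.sq_sqrt (heignn _)
      exact mul_le_mul_of_nonneg_right h2 (sq_nonneg _)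
    · have hc : u.repr x (p j) = 0 := by
        refine repr_zero_of_mem_span u g hx ?_
        intro j' hj'
        have h := congrArg Fin.val (p.injective hj')
        simp at h
        omega
      simp [hc]
  have h1 : (RT.singVals A i * ‖x‖) ^ 2 ≤ ‖Matrix.toEuclideanLin A x‖ ^ 2 := by
    rw [mul_pow]; exact hsum
  calc RT.singVals A i * ‖x‖
      = Real.sqrt ((RT.singVals A i * ‖x‖) ^ 2) :=
        (Real.sqrt_sq (mul_nonneg (singVals_nonneg A i) (norm_nonneg x))).symm
    _ ≤ Real.sqrt (‖Matrix.toEuclideanLin A x‖ ^ 2) := Real.sqrt_le_sqrt h1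
    _ = ‖Matrix.toEuclideanLin A x‖ := Real.sqrt_sq (norm_nonneg _)
end StmtAux

namespace StmtAux
variable {n : ℕ}
lemma sv_upper (B : Matrix (Fin n) (Fin n) ℂ) (i : Fin n) :
    ∃ U : Submodule ℂ (E n), Module.finrank ℂ U = n - i.1 ∧
      ∀ y ∈ U, ‖Matrix.toEuclideanLin B y‖ ≤ RT.singVals B i * ‖y‖ := by
  have hB := Matrix.isHermitian_conjTranspose_mul_self B
  set eB := hB.eigenvalues with heB
  set u := hB.eigenvectorBasis with hu
  set p := Tuple.sort (fun j => - Real.sqrt (eB j)) with hp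
  have hsv : ∀ k : Fin n, RT.singVals B k = Real.sqrt (eB (p k)) := fun k => singVals_eq B k
  have heignn : ∀ k, 0 ≤ eB k := fun k => (Matrix.posSemidef_conjTranspose_mul_self B).eigenvalues_nonneg k
  set g : Fin (n - i.1) → Fin n := fun j => p ⟨i.1 + j.1, by omega⟩ with hg
  have hginj : Function.Injective g := by
    intro a b hab
    have h := congrArg Fin.val (p.injective hab)
    simp at h
    exact Fin.ext h
  refine ⟨Submodule.span ℂ (Set.range fun j => (u (g j) : E n)),
    finrank_span_orthonormal u g hginj, ?_⟩
  intro y hy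
  have hy2 : ‖Matrix.toEuclideanLin B y‖ ^ 2 = ∑ k, eB k * ‖u.repr y k‖ ^ 2 := by
    rw [norm_toEuclideanLin_sq, qf_expand hB y (fun j => repr_toEuclideanLin hB y j)]
  have hsum : ‖Matrix.toEuclideanLin B y‖ ^ 2 ≤ (RT.singVals B i) ^ 2 * ‖y‖ ^ 2 := by
    rw [hy2, norm_sq_repr u y,
      ← Equiv.sum_comp p (fun k => eB k * ‖u.repr y k‖ ^ 2),
      ← Equiv.sum_comp p (fun k => ‖u.repr y k‖ ^ 2), Finset.mul_sum]
    apply Finset.sum_le_sum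
    intro j _
    by_cases hj : i.1 ≤ j.1
    · have hle : Real.sqrt (eB (p j)) ≤ RT.singVals B i := by
        rw [← hsv j]; exact singVals_antitone B (by exact hj)
      have h2 : eB (p j) ≤ (RT.singVals B i) ^ 2 := by
        calc eB (p j) = (Real.sqrt (eB (p j))) ^ 2 := (Real.sq_sqrt (heignn _)).symm
          _ ≤ (RT.singVals B i) ^ 2 := pow_le_pow_left₀ (Real.sqrt_nonneg _) hle 2
      exact mul_le_mul_of_nonneg_right h2 (sq_nonneg _)
    · have hc : u.repr y (p j) = 0 := by
        refine repr_zero_of_mem_span u g hy ?_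
        intro j' hj'
        have h := congrArg Fin.val (p.injective hj')
        simp at h
        omega
      simp [hc]
  have h1 : ‖Matrix.toEuclideanLin B y‖ ^ 2 ≤ (RT.singVals B i * ‖y‖) ^ 2 := by
    rw [mul_pow]; exact hsum
  calc ‖Matrix.toEuclideanLin B y‖
      = Real.sqrt (‖Matrix.toEuclideanLin B y‖ ^ 2) := (Real.sqrt_sq (norm_nonneg _)).symm
    _ ≤ Real.sqrt ((RT.singVals B i * ‖y‖) ^ 2) := Real.sqrt_le_sqrt h1
    _ = RT.singVals B i * ‖y‖ :=
        Real.sqrt_sq (mul_nonneg (singVals_nonneg B i) (norm_nonneg y))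

lemma CFkey (A B S : Matrix (Fin n) (Fin n) ℂ) (c d : ℝ) (hc : 0 ≤ c)
    (hS : Function.Injective (Matrix.toEuclideanLin S))
    (h1 : ∀ x, ‖Matrix.toEuclideanLin A x‖
        ≤ c * ‖Matrix.toEuclideanLin B (Matrix.toEuclideanLin S x)‖)
    (h2 : ∀ x, ‖Matrix.toEuclideanLin S x‖ ≤ d * ‖x‖) (i : Fin n) :
    RT.singVals A i ≤ c * d * RT.singVals B i := by
  obtain ⟨V, hVrank, hV⟩ := sv_lower A i
  obtain ⟨U, hUrank, hU⟩ := sv_upper B i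
  set V' := V.map (Matrix.toEuclideanLin S) with hV'
  have hV'rank : Module.finrank ℂ V' = i.1 + 1 := by
    rw [← hVrank]
    exact (Submodule.equivMapOfInjective _ hS V).finrank_eq.symm
  have hdim := Submodule.finrank_sup_add_finrank_inf_eq V' U
  have hsup : Module.finrank ℂ ↥(V' ⊔ U) ≤ n := by
    have := Submodule.finrank_le (V' ⊔ U)
    rwa [finrank_euclideanSpace, Fintype.card_fin] at this
  have hin : Module.finrank ℂ ↥(V' ⊓ U) ≠ 0 := by
    rw [hV'rank, hUrank] at hdim
    have hi := i.isLt
    omega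
  have hbot : V' ⊓ U ≠ ⊥ := by
    intro h
    rw [h, finrank_bot] at hin
    exact hin rfl
  obtain ⟨y, hy, hy0⟩ := (Submodule.ne_bot_iff _).mp hbot
  obtain ⟨hyV', hyU⟩ := Submodule.mem_inf.mp hy
  obtain ⟨x, hxV, rfl⟩ := Submodule.mem_map.mp hyV'
  have hx0 : x ≠ 0 := by
    intro h; exact hy0 (by rw [h, map_zero])
  have hxn : 0 < ‖x‖ := norm_pos_iff.mpr hx0
  have hchain : RT.singVals A i * ‖x‖ ≤ (c * d * RT.singVals B i) * ‖x‖ := by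
    calc RT.singVals A i * ‖x‖ ≤ ‖Matrix.toEuclideanLin A x‖ := hV x hxV
      _ ≤ c * ‖Matrix.toEuclideanLin B (Matrix.toEuclideanLin S x)‖ := h1 x
      _ ≤ c * (RT.singVals B i * ‖Matrix.toEuclideanLin S x‖) :=
          mul_le_mul_of_nonneg_left (hU _ hyU) hc
      _ ≤ c * (RT.singVals B i * (d * ‖x‖)) := by
          refine mul_le_mul_of_nonneg_left ?_ hc
          exact mul_le_mul_of_nonneg_left (h2 x) (singVals_nonneg B i)
      _ = (c * d * RT.singVals B i) * ‖x‖ := by ring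
  exact le_of_mul_le_mul_right hchain hxn
end StmtAux



namespace StmtAux
variable {n : ℕ}

lemma tel_mul (X Y : Matrix (Fin n) (Fin n) ℂ) (x : E n) :
    Matrix.toEuclideanLin (X * Y) x
      = Matrix.toEuclideanLin X (Matrix.toEuclideanLin Y x) := by
  apply (WithLp.equiv 2 _).injective
  simp [Matrix.toEuclideanLin_apply, Matrix.mulVec_mulVec]

lemma tel_one (x : E n) : Matrix.toEuclideanLin (1 : Matrix (Fin n) (Fin n) ℂ) x = x := by
  apply (WithLp.equiv 2 _).injective
  simp [Matrix.toEuclideanLin_apply]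

lemma eigMax_eq {W : Matrix (Fin n) (Fin n) ℂ} (hW : W.IsHermitian) :
    RT.eigMax W = ⨆ i, hW.eigenvalues i := by
  simp only [RT.eigMax, dif_pos hW]

lemma eigMin_eq {W : Matrix (Fin n) (Fin n) ℂ} (hW : W.IsHermitian) :
    RT.eigMin W = ⨅ i, hW.eigenvalues i := by
  simp only [RT.eigMin, dif_pos hW]

lemma pd_bounds (hn : 0 < n) {W : Matrix (Fin n) (Fin n) ℂ} (hW : W.PosDef) :
    0 < RT.eigMin W ∧ 0 < RT.eigMax W ∧
      (∀ x : E n, ‖Matrix.toEuclideanLin W x‖ ≤ RT.eigMax W * ‖x‖) ∧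
      (∀ x : E n, RT.eigMin W * ‖x‖ ≤ ‖Matrix.toEuclideanLin W x‖) := by
  haveI : Nonempty (Fin n) := ⟨⟨0, hn⟩⟩
  have h := hW.1
  set e := h.eigenvalues with he
  have hpos : ∀ k, 0 < e k := hW.eigenvalues_pos
  have hle : ∀ k, e k ≤ RT.eigMax W := by
    intro k
    rw [eigMax_eq h]
    exact le_ciSup (Set.Finite.bddAbove (Set.finite_range _)) k
  have hge : ∀ k, RT.eigMin W ≤ e k := by
    intro k
    rw [eigMin_eq h]
    exact ciInf_le (Set.Finite.bddBelow (Set.finite_range _)) k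
  have hminpos : 0 < RT.eigMin W := by
    obtain ⟨k0, _, hk0⟩ := Finset.exists_min_image Finset.univ e ⟨Classical.arbitrary _, Finset.mem_univ _⟩
    rw [eigMin_eq h]
    have : e k0 ≤ ⨅ i, e i := le_ciInf (fun i => hk0 i (Finset.mem_univ i))
    exact lt_of_lt_of_le (hpos k0) this
  have hmaxpos : 0 < RT.eigMax W :=
    lt_of_lt_of_le hminpos (le_trans (hge (Classical.arbitrary _)) (hle _))
  refine ⟨hminpos, hmaxpos, ?_, ?_⟩ <;> intro x
  · have hsq : ‖Matrix.toEuclideanLin W x‖ ^ 2 ≤ (RT.eigMax W) ^ 2 * ‖x‖ ^ 2 := by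
      rw [norm_sq_repr h.eigenvectorBasis (Matrix.toEuclideanLin W x), norm_sq_repr h.eigenvectorBasis x, Finset.mul_sum]
      apply Finset.sum_le_sum
      intro k _
      rw [repr_toEuclideanLin h x k, norm_mul, mul_pow, Complex.norm_real,
        Real.norm_eq_abs, abs_of_nonneg (hpos k).le]
      exact mul_le_mul_of_nonneg_right
        (pow_le_pow_left₀ (hpos k).le (hle k) 2) (sq_nonneg _)
    calc ‖Matrix.toEuclideanLin W x‖
        = Real.sqrt (‖Matrix.toEuclideanLin W x‖ ^ 2) := (Real.sqrt_sq (norm_nonneg _)).symm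
      _ ≤ Real.sqrt ((RT.eigMax W * ‖x‖) ^ 2) := Real.sqrt_le_sqrt (by rw [mul_pow]; exact hsq)
      _ = RT.eigMax W * ‖x‖ := Real.sqrt_sq (mul_nonneg hmaxpos.le (norm_nonneg _))
  · have hsq : (RT.eigMin W) ^ 2 * ‖x‖ ^ 2 ≤ ‖Matrix.toEuclideanLin W x‖ ^ 2 := by
      rw [norm_sq_repr h.eigenvectorBasis (Matrix.toEuclideanLin W x), norm_sq_repr h.eigenvectorBasis x, Finset.mul_sum]
      apply Finset.sum_le_sum
      intro k _
      rw [repr_toEuclideanLin h x k, norm_mul, mul_pow, Complex.norm_real,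
        Real.norm_eq_abs, abs_of_nonneg (hpos k).le]
      exact mul_le_mul_of_nonneg_right
        (pow_le_pow_left₀ hminpos.le (hge k) 2) (sq_nonneg _)
    calc RT.eigMin W * ‖x‖
        = Real.sqrt ((RT.eigMin W * ‖x‖) ^ 2) :=
          (Real.sqrt_sq (mul_nonneg hminpos.le (norm_nonneg _))).symm
      _ ≤ Real.sqrt (‖Matrix.toEuclideanLin W x‖ ^ 2) :=
          Real.sqrt_le_sqrt (by rw [mul_pow]; exact hsq)
      _ = ‖Matrix.toEuclideanLin W x‖ := Real.sqrt_sq (norm_nonneg _)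

lemma lqNorm_nonneg {m : ℕ} (q : ℝ) (v : Fin m → ℝ) : 0 ≤ RT.lqNorm q v :=
  Real.rpow_nonneg
    (Finset.sum_nonneg fun j _ => Real.rpow_nonneg (abs_nonneg _) q) _

lemma headFro_mono (M N : Matrix (Fin n) (Fin n) ℂ) (t : ℝ) (ht : 0 ≤ t)
    (h : ∀ i, RT.singVals M i ≤ t * RT.singVals N i) (r : ℕ) :
    RT.headFro M r ≤ t * RT.headFro N r := by
  unfold RT.headFro
  have hstep : (∑ i : Fin n, if (i : ℕ) < r then (RT.singVals M i) ^ 2 else 0)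
      ≤ t ^ 2 * ∑ i : Fin n, if (i : ℕ) < r then (RT.singVals N i) ^ 2 else 0 := by
    rw [Finset.mul_sum]
    apply Finset.sum_le_sum
    intro i _
    split
    · calc (RT.singVals M i) ^ 2 ≤ (t * RT.singVals N i) ^ 2 :=
          pow_le_pow_left₀ (singVals_nonneg M i) (h i) 2
        _ = t ^ 2 * (RT.singVals N i) ^ 2 := by ring
    · simp
  calc Real.sqrt (∑ i : Fin n, if (i : ℕ) < r then (RT.singVals M i) ^ 2 else 0)
      ≤ Real.sqrt (t ^ 2 * ∑ i : Fin n, if (i : ℕ) < r then (RT.singVals N i) ^ 2 else 0) :=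
        Real.sqrt_le_sqrt hstep
    _ = t * Real.sqrt (∑ i : Fin n, if (i : ℕ) < r then (RT.singVals N i) ^ 2 else 0) := by
        rw [Real.sqrt_mul (sq_nonneg t), Real.sqrt_sq ht]

lemma tailNuc_mono (M N : Matrix (Fin n) (Fin n) ℂ) (t : ℝ)
    (h : ∀ i, RT.singVals N i ≤ t * RT.singVals M i) (r : ℕ) :
    RT.tailNuc N r ≤ t * RT.tailNuc M r := by
  unfold RT.tailNuc
  rw [Finset.mul_sum]
  apply Finset.sum_le_sum
  intro i _
  split
  · exact h i
  · simp

end StmtAux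

theorem stmt3 {n m : ℕ} (q : ℝ) (hq : 1 ≤ q) (r : ℕ)
    (A : Matrix (Fin n) (Fin n) ℂ → (Fin m → ℝ))
    (hadd : ∀ X Y, A (X + Y) = A X + A Y)
    (hsmul : ∀ (c : ℝ) (X), A (c • X) = c • A X)
    (ρ τ : ℝ) (hρ0 : 0 < ρ) (hρ1 : ρ < 1) (hτ : 0 < τ)
    (hNSP : RT.FrobRobustNSP A q r ρ τ)
    (W : Matrix (Fin n) (Fin n) ℂ) (hW : W.PosDef) (hWinv : IsUnit W)
    (hκ : (RT.eigMax W / RT.eigMin W) ^ 2 * ρ < 1) :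
    RT.FrobRobustNSP (fun X => A (W⁻¹ * X * W⁻¹)) q r
      ((RT.eigMax W / RT.eigMin W) ^ 2 * ρ) ((RT.eigMax W) ^ 2 * τ) := by
  classical
  rcases Nat.eq_zero_or_pos n with rfl | hn
  · -- trivial case n = 0
    intro M hM
    have h1 : RT.headFro M r = 0 := by simp [RT.headFro]
    have h2 : RT.tailNuc M r = 0 := by simp [RT.tailNuc]
    rw [h1, h2, mul_zero, zero_add]
    exact mul_nonneg (mul_nonneg (sq_nonneg _) hτ.le) (StmtAux.lqNorm_nonneg q _)
  · intro M hM
    set lmax := RT.eigMax W with hlmax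
    set lmin := RT.eigMin W with hlmin
    obtain ⟨hminpos, hmaxpos, hub, hlb⟩ := StmtAux.pd_bounds hn hW
    have hWdet : IsUnit W.det := (Matrix.isUnit_iff_isUnit_det W).mp hWinv
    have hWmi : W * W⁻¹ = 1 := Matrix.mul_nonsing_inv W hWdet
    have hWim : W⁻¹ * W = 1 := Matrix.nonsing_inv_mul W hWdet
    set N := W⁻¹ * M * W⁻¹ with hNdef
    have hWiH : (W⁻¹).IsHermitian := hW.1.inv
    have hNherm : N.IsHermitian := by
      show Nᴴ = N
      rw [hNdef, Matrix.conjTranspose_mul, Matrix.conjTranspose_mul, hWiH.eq, hM.eq,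
        Matrix.mul_assoc]
    have hMN : M = W * N * W := by
      rw [hNdef, Matrix.mul_assoc W (W⁻¹ * M * W⁻¹) W,
        Matrix.mul_assoc (W⁻¹ * M) W⁻¹ W, hWim, Matrix.mul_one,
        ← Matrix.mul_assoc W W⁻¹ M, hWmi, Matrix.one_mul]
    -- injectivity
    have hWinj : Function.Injective (Matrix.toEuclideanLin W) := by
      intro x y hxy
      have := congrArg (Matrix.toEuclideanLin W⁻¹) hxy
      rwa [← StmtAux.tel_mul, ← StmtAux.tel_mul, hWim, StmtAux.tel_one, StmtAux.tel_one]
        at this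
    have hWiinj : Function.Injective (Matrix.toEuclideanLin W⁻¹) := by
      intro x y hxy
      have := congrArg (Matrix.toEuclideanLin W) hxy
      rwa [← StmtAux.tel_mul, ← StmtAux.tel_mul, hWmi, StmtAux.tel_one, StmtAux.tel_one]
        at this
    -- inverse norm bound
    have hinvb : ∀ x : StmtAux.E n, ‖Matrix.toEuclideanLin W⁻¹ x‖ ≤ lmin⁻¹ * ‖x‖ := by
      intro x
      have h := hlb (Matrix.toEuclideanLin W⁻¹ x)
      rw [← StmtAux.tel_mul, hWmi, StmtAux.tel_one] at h
      rw [inv_mul_eq_div, le_div_iff₀ hminpos, mul_comm]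
      exact h
    -- singular value comparisons
    have hMle : ∀ i, RT.singVals M i ≤ lmax * lmax * RT.singVals N i := by
      intro i
      refine StmtAux.CFkey M N W lmax lmax hmaxpos.le hWinj ?_ hub i
      intro x
      conv_lhs => rw [hMN]
      rw [show (W * N * W : Matrix (Fin n) (Fin n) ℂ) = W * (N * W) by
        rw [Matrix.mul_assoc], StmtAux.tel_mul, StmtAux.tel_mul]
      exact hub _
    have hNle : ∀ i, RT.singVals N i ≤ lmin⁻¹ * lmin⁻¹ * RT.singVals M i := by
      intro i
      refine StmtAux.CFkey N M W⁻¹ lmin⁻¹ lmin⁻¹ (inv_nonneg.mpr hminpos.le) hWiinj ?_ hinvb i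
      intro x
      rw [hNdef, show (W⁻¹ * M * W⁻¹ : Matrix (Fin n) (Fin n) ℂ) = W⁻¹ * (M * W⁻¹) by
        rw [Matrix.mul_assoc], StmtAux.tel_mul, StmtAux.tel_mul]
      exact hinvb _
    -- head and tail comparisons
    have hhead : RT.headFro M r ≤ (lmax * lmax) * RT.headFro N r :=
      StmtAux.headFro_mono M N _ (mul_nonneg hmaxpos.le hmaxpos.le) hMle r
    have htail : RT.tailNuc N r ≤ (lmin⁻¹ * lmin⁻¹) * RT.tailNuc M r :=
      StmtAux.tailNuc_mono M N _ hNle r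
    have hNSPN := hNSP N hNherm
    have hρr : 0 ≤ ρ / Real.sqrt r := div_nonneg hρ0.le (Real.sqrt_nonneg _)
    have hlq : 0 ≤ RT.lqNorm q (A N) := StmtAux.lqNorm_nonneg q _
    have htailM : 0 ≤ RT.tailNuc M r :=
      Finset.sum_nonneg fun i _ => by
        split
        · exact StmtAux.singVals_nonneg M i
        · exact le_refl 0
    have hco : (lmax * lmax) * (ρ / Real.sqrt r) * (lmin⁻¹ * lmin⁻¹)
        = (lmax / lmin) ^ 2 * ρ / Real.sqrt r := by
      rw [div_eq_mul_inv ((lmax / lmin) ^ 2 * ρ), div_eq_mul_inv ρ]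
      have : (lmax * lmax) * (ρ * (Real.sqrt r)⁻¹) * (lmin⁻¹ * lmin⁻¹)
          = ((lmax / lmin) ^ 2 * ρ) * (Real.sqrt r)⁻¹ := by
        field_simp
      exact this
    calc RT.headFro M r ≤ (lmax * lmax) * RT.headFro N r := hhead
      _ ≤ (lmax * lmax) * ((ρ / Real.sqrt r) * RT.tailNuc N r + τ * RT.lqNorm q (A N)) :=
          mul_le_mul_of_nonneg_left hNSPN (mul_nonneg hmaxpos.le hmaxpos.le)
      _ = (lmax * lmax) * (ρ / Real.sqrt r) * RT.tailNuc N r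
            + (lmax ^ 2 * τ) * RT.lqNorm q (A N) := by ring
      _ ≤ (lmax * lmax) * (ρ / Real.sqrt r) * ((lmin⁻¹ * lmin⁻¹) * RT.tailNuc M r)
            + (lmax ^ 2 * τ) * RT.lqNorm q (A N) := by
          have := mul_le_mul_of_nonneg_left htail
            (mul_nonneg (mul_nonneg hmaxpos.le hmaxpos.le) hρr)
          linarith
      _ = ((lmax / lmin) ^ 2 * ρ / Real.sqrt r) * RT.tailNuc M r
            + (lmax ^ 2 * τ) * RT.lqNorm q (A N) := by
          rw [← hco]; ring
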